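/- Let A be an n×n Hermitian matrix with orthonormal eigenvectors z₁,…,zₙ and eigenvalues λ₁,…,λₙ. If for some time t and standard basis vector |a⟩ one has |⟨a| exp(−itA) |a⟩| = 1, i.e. exp(−itA)|a⟩ = γ|a⟩ for some unimodular γ, and ⟨a|zₖ⟩ ≠ 0 for all k, then exp(−itA) = γ·I. -/

import Mathlib

open Matrix BigOperators

theorem perfect_return_implies_periodic (n : ℕ) (A : Matrix (Fin n) (Fin n) ℂ)
    (hA : A.IsHermitian) (z : Fin n → (Fin n → ℂ)) (lam : Fin n → ℝ)
    (horth : ∀ k l, ∑ i, (starRingEnd ℂ) (z k i) * z l i = if k = l then 1 else 0)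
    (heig : ∀ k, A.mulVec (z k) = ((lam k : ℂ)) • z k)
    (a : Fin n) (hsupp : ∀ k, z k a ≠ 0)
    (t : ℝ) (γ : ℂ) (hγ : ‖γ‖ = 1)
    (hret : (NormedSpace.exp ((-(Complex.I * (t : ℂ))) • A)).mulVec
        ((Pi.single a 1 : Fin n → ℂ)) = γ • (Pi.single a 1 : Fin n → ℂ)) :
    NormedSpace.exp ((-(Complex.I * (t : ℂ))) • A) =
      γ • (1 : Matrix (Fin n) (Fin n) ℂ) := by
  classical
  set c : ℂ := -(Complex.I * (t : ℂ)) with hc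
  -- U has the eigenvectors as columns
  set U : Matrix (Fin n) (Fin n) ℂ := Matrix.of (fun i k => z k i) with hU
  -- Uᴴ U = 1
  have hUHU : Uᴴ * U = 1 := by
    ext k l
    simpa [Matrix.mul_apply, Matrix.conjTranspose_apply, hU, Matrix.one_apply]
      using horth k l
  have hUUH : U * Uᴴ = 1 := mul_eq_one_comm.mp hUHU
  have hUnit : IsUnit U := ⟨⟨U, Uᴴ, hUUH, hUHU⟩, rfl⟩
  have hUinv : U⁻¹ = Uᴴ := Matrix.inv_eq_right_inv hUUH
  -- A U = U D
  set D : Matrix (Fin n) (Fin n) ℂ := Matrix.diagonal (fun k => (lam k : ℂ)) with hD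
  have hAU : A * U = U * D := by
    ext i k
    have h := congrFun (heig k) i
    simp only [Matrix.mulVec, dotProduct, Pi.smul_apply, smul_eq_mul] at h
    simp [Matrix.mul_apply, hU, hD, Matrix.diagonal_apply, Finset.mul_sum]
    simpa [mul_comm] using h
  have hAeq : c • A = U * (c • D) * U⁻¹ := by
    have hA' : A = U * D * U⁻¹ := by
      rw [hUinv]
      calc A = A * (U * Uᴴ) := by rw [hUUH, mul_one]
        _ = (A * U) * Uᴴ := by rw [mul_assoc]
        _ = U * D * Uᴴ := by rw [hAU]
    rw [hA']
    simp [Matrix.mul_smul, Matrix.smul_mul]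
  -- exponential
  have hexp : NormedSpace.exp (c • A)
      = U * Matrix.diagonal (fun k => NormedSpace.exp (c * (lam k : ℂ))) * Uᴴ := by
    rw [hAeq, Matrix.exp_conj U (c • D) hUnit, hUinv]
    congr 2
    have : c • D = Matrix.diagonal (fun k => c * (lam k : ℂ)) := by
      rw [hD, ← Matrix.diagonal_smul]
      congr 1
    rw [this, Matrix.exp_diagonal, Pi.exp_def]
  set μ : Fin n → ℂ := fun k => NormedSpace.exp (c * (lam k : ℂ)) with hμ
  set E : Matrix (Fin n) (Fin n) ℂ := NormedSpace.exp (c • A) with hE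
  -- column a of E
  have hcol : ∀ i, E i a = γ * (if i = a then 1 else 0) := by
    intro i
    have h := congrFun hret i
    simp only [Matrix.mulVec_single, mul_one, Pi.smul_apply, smul_eq_mul] at h
    simpa [Pi.single_apply] using h
  -- extract phases: μ l = γ
  have hphase : ∀ l, μ l = γ := by
    intro l
    have h1 : (Uᴴ * E) l a = μ l * (starRingEnd ℂ) (z l a) := by
      have : Uᴴ * E = Matrix.diagonal μ * Uᴴ := by
        rw [hexp, ← mul_assoc, ← mul_assoc, hUHU, one_mul]
      rw [this, Matrix.diagonal_mul]
      simp [Matrix.conjTranspose_apply, hU]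
    have h2 : (Uᴴ * E) l a = γ * (starRingEnd ℂ) (z l a) := by
      rw [Matrix.mul_apply]
      simp only [hcol, Matrix.conjTranspose_apply, hU, Matrix.of_apply, mul_ite, mul_one,
        mul_zero, Matrix.star_apply]
      rw [Finset.sum_ite_eq' Finset.univ a]
      simp [mul_comm]
    have hne : (starRingEnd ℂ) (z l a) ≠ 0 := by
      simpa using hsupp l
    have := h1.symm.trans h2
    exact mul_right_cancel₀ hne this
  -- conclude
  have hdiag : Matrix.diagonal μ = γ • (1 : Matrix (Fin n) (Fin n) ℂ) := by
    funext i j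
    by_cases h : i = j
    · subst h; simp [Matrix.diagonal_apply_eq, hphase, Matrix.one_apply]
    · simp [Matrix.diagonal_apply_ne _ h, Matrix.one_apply, h]
  calc NormedSpace.exp (c • A) = U * Matrix.diagonal μ * Uᴴ := hexp
    _ = U * (γ • (1 : Matrix (Fin n) (Fin n) ℂ)) * Uᴴ := by rw [hdiag]
    _ = γ • (U * Uᴴ) := by
        simp [Matrix.mul_smul, Matrix.smul_mul]
    _ = γ • (1 : Matrix (Fin n) (Fin n) ℂ) := by rw [hUUH]
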